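/- Let f : [0,∞) → ℂ belong to the class V_bC_g, let μ_f be the complex Borel measure on [0,∞) with μ_f([0,x)) = f(x) and finite total variation, and let g : [0,∞) → ℂ be of class C¹ on [0,∞) with g' ∈ L¹([0,∞)). Then ∫_{[0,∞)} g dμ_f = lim_{x→∞} f(x)g(x) − ∫₀^∞ f(t) g'(t) dt (the limit lim_{x→∞} f(x)g(x) existing and being equal to μ_{fg}([0,∞)), where μ_{fg} is the complex Borel measure with μ_{fg}([0,x)) = f(x)g(x)). -/

import Mathlib

open MeasureTheory Set Filter

/-- The class `V_bC_g` of functions `f : [0,∞) → ℂ` of bounded variation on `[0,∞)`,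
left-continuous at every point of `[0,∞)`, and vanishing at `0`. -/
def VbCg (f : ℝ → ℂ) : Prop :=
  eVariationOn f (Set.Ici 0) ≠ ⊤ ∧
    (∀ x : ℝ, 0 ≤ x → ContinuousWithinAt f (Set.Iic x) x) ∧ f 0 = 0

/-- Let `f ∈ V_bC_g` and let `μ_f` be the complex Borel measure on `[0,∞)`
with `μ_f([0,x)) = f x` and finite total variation; by Radon–Nikodym it is represented as
`dμ_f = h dν` with `ν = |μ_f|` a finite positive Borel measure carried by `[0,∞)` and `‖h‖ ≡ 1`.
Let `g : [0,∞) → ℂ` be of class `C¹` on `[0,∞)` with `g'` integrable on `[0,∞)`.  Then the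
limit `L = lim_{x→∞} f(x) g(x)` exists (it equals `μ_{fg}([0,∞))`) and
`∫_{[0,∞)} g dμ_f = lim_{x→∞} f(x)g(x) − ∫_{[0,∞)} f(t) g'(t) dt`. -/
theorem stmt6 (f : ℝ → ℂ) (hf : VbCg f)
    (ν : MeasureTheory.Measure ℝ) [MeasureTheory.IsFiniteMeasure ν]
    (hνsupp : ν (Set.Iio 0) = 0)
    (h : ℝ → ℂ) (hh_meas : Measurable h) (hh_norm : ∀ x : ℝ, ‖h x‖ = 1)
    (hrep : ∀ x : ℝ, 0 ≤ x → (∫ t in Set.Ico 0 x, h t ∂ν) = f x)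
    (g g' : ℝ → ℂ)
    (hderiv : ∀ x ∈ Set.Ici (0 : ℝ), HasDerivWithinAt g (g' x) (Set.Ici 0) x)
    (hcont : ContinuousOn g' (Set.Ici 0))
    (hint : MeasureTheory.IntegrableOn g' (Set.Ici 0)) :
    ∃ L : ℂ, Filter.Tendsto (fun x => f x * g x) Filter.atTop (nhds L) ∧
      (∫ x in Set.Ici (0 : ℝ), g x * h x ∂ν) = L - ∫ t in Set.Ici (0 : ℝ), f t * g' t := by
  have hh_int : Integrable h ν := by
    refine (integrable_const (1 : ℝ)).mono' hh_meas.aestronglyMeasurable ?_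
    filter_upwards with x
    simp [hh_norm x]
  set fInf : ℂ := ∫ t in Set.Ici (0 : ℝ), h t ∂ν with hfInfdef
  -- splitting `[0,∞) = [0,s) ∪ [s,∞)`
  have hsplit : ∀ s : ℝ, 0 ≤ s → (∫ t in Set.Ici s, h t ∂ν) = fInf - f s := by
    intro s hs
    have hd : Disjoint (Set.Ico (0 : ℝ) s) (Set.Ici s) := by
      rw [Set.disjoint_left]
      rintro x ⟨_, hx2⟩ hx3
      exact absurd hx3 (not_le.2 hx2)
    have hu := MeasureTheory.setIntegral_union hd measurableSet_Ici
      (hh_int.integrableOn) (hh_int.integrableOn) (f := h) (μ := ν)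
    rw [Set.Ico_union_Ici_eq_Ici hs] at hu
    rw [hfInfdef, hu, hrep s hs]
    ring
  -- fundamental theorem of calculus
  have gcont : ContinuousOn g (Set.Ici (0 : ℝ)) := fun x hx =>
    (hderiv x hx).continuousWithinAt
  have FTC : ∀ t : ℝ, 0 ≤ t → (∫ s in Set.Ioc (0 : ℝ) t, g' s) = g t - g 0 := by
    intro t ht
    have hsub : Set.uIcc (0 : ℝ) t ⊆ Set.Ici 0 := by
      rw [Set.uIcc_of_le ht]
      exact fun x hx => hx.1
    have hii : IntervalIntegrable g' volume 0 t := (hint.mono_set hsub).intervalIntegrable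
    have hcont' : ContinuousOn g (Set.Icc (0 : ℝ) t) :=
      gcont.mono (Set.Icc_subset_Ici_self)
    have hd' : ∀ x ∈ Set.Ioo (0 : ℝ) t, HasDerivAt g (g' x) x := fun x hx =>
      (hderiv x hx.1.le).hasDerivAt (Ici_mem_nhds hx.1)
    rw [← intervalIntegral.integral_of_le ht]
    exact intervalIntegral.integral_eq_sub_of_hasDerivAt_of_le ht hcont' hd' hii
  -- integrability data
  have Ig' : Integrable g' ((volume : Measure ℝ).restrict (Set.Ioi 0)) :=
    hint.mono_set Set.Ioi_subset_Ici_self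
  have Ih : Integrable h (ν.restrict (Set.Ici 0)) := hh_int.integrableOn
  set Fu : ℝ × ℝ → ℂ :=
    ({p : ℝ × ℝ | p.1 ≤ p.2}).indicator (fun p => g' p.1 * h p.2) with hFudef
  have hFint : Integrable Fu
      (((volume : Measure ℝ).restrict (Set.Ioi 0)).prod (ν.restrict (Set.Ici 0))) :=
    (Ig'.mul_prod Ih).indicator (measurableSet_le measurable_fst measurable_snd)
  have hswap :
      (∫ s, (∫ t, Fu (s, t) ∂(ν.restrict (Set.Ici 0)))
          ∂((volume : Measure ℝ).restrict (Set.Ioi 0)))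
        = ∫ t, (∫ s, Fu (s, t) ∂((volume : Measure ℝ).restrict (Set.Ioi 0)))
          ∂(ν.restrict (Set.Ici 0)) :=
    MeasureTheory.integral_integral_swap (f := fun s t => Fu (s, t)) hFint
  -- inner integrals
  have hinnerL : ∀ s : ℝ, 0 < s →
      (∫ t, Fu (s, t) ∂(ν.restrict (Set.Ici 0))) = g' s * (fInf - f s) := by
    intro s hs
    have he : (fun t => Fu (s, t)) = (Set.Ici s).indicator (fun t => g' s * h t) := by
      funext t
      simp only [hFudef, Set.indicator, Set.mem_setOf_eq, Set.mem_Ici]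
    rw [he, MeasureTheory.integral_indicator measurableSet_Ici,
      MeasureTheory.Measure.restrict_restrict measurableSet_Ici]
    have h2 : Set.Ici s ∩ Set.Ici (0 : ℝ) = Set.Ici s := by
      rw [Set.inter_eq_left]
      exact Set.Ici_subset_Ici.2 hs.le
    rw [h2, MeasureTheory.integral_const_mul, hsplit s hs.le]
  have hinnerR : ∀ t : ℝ, 0 ≤ t →
      (∫ s, Fu (s, t) ∂((volume : Measure ℝ).restrict (Set.Ioi 0)))
        = (g t - g 0) * h t := by
    intro t ht
    have he : (fun s => Fu (s, t)) = (Set.Iic t).indicator (fun s => g' s * h t) := by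
      funext s
      simp only [hFudef, Set.indicator, Set.mem_setOf_eq, Set.mem_Iic]
    rw [he, MeasureTheory.integral_indicator measurableSet_Iic,
      MeasureTheory.Measure.restrict_restrict measurableSet_Iic]
    have h2 : Set.Iic t ∩ Set.Ioi (0 : ℝ) = Set.Ioc 0 t := by
      rw [Set.inter_comm, Set.Ioi_inter_Iic]
    rw [h2, MeasureTheory.integral_mul_const, FTC t ht]
  have aeL : ∀ᵐ s ∂((volume : Measure ℝ).restrict (Set.Ioi 0)),
      (∫ t, Fu (s, t) ∂(ν.restrict (Set.Ici 0))) = g' s * (fInf - f s) := by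
    filter_upwards [ae_restrict_mem measurableSet_Ioi] with s hs
    exact hinnerL s hs
  have aeR : ∀ᵐ t ∂(ν.restrict (Set.Ici 0)),
      (∫ s, Fu (s, t) ∂((volume : Measure ℝ).restrict (Set.Ioi 0)))
        = (g t - g 0) * h t := by
    filter_upwards [ae_restrict_mem measurableSet_Ici] with t ht
    exact hinnerR t ht
  -- Fubini identity
  have hFub : (∫ s in Set.Ioi (0 : ℝ), g' s * (fInf - f s))
      = ∫ t in Set.Ici (0 : ℝ), (g t - g 0) * h t ∂ν := by
    calc (∫ s in Set.Ioi (0 : ℝ), g' s * (fInf - f s))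
        = ∫ s, (∫ t, Fu (s, t) ∂(ν.restrict (Set.Ici 0)))
            ∂((volume : Measure ℝ).restrict (Set.Ioi 0)) :=
          (integral_congr_ae aeL).symm
      _ = ∫ t, (∫ s, Fu (s, t) ∂((volume : Measure ℝ).restrict (Set.Ioi 0)))
            ∂(ν.restrict (Set.Ici 0)) := hswap
      _ = ∫ t in Set.Ici (0 : ℝ), (g t - g 0) * h t ∂ν := integral_congr_ae aeR
  -- integrability of the pieces
  have IL : Integrable (fun s => g' s * (fInf - f s))
      ((volume : Measure ℝ).restrict (Set.Ioi 0)) :=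
    (hFint.integral_prod_left).congr aeL
  have IR : Integrable (fun t => (g t - g 0) * h t) (ν.restrict (Set.Ici 0)) :=
    (hFint.integral_prod_right).congr aeR
  have Ifg' : Integrable (fun s => g' s * f s)
      ((volume : Measure ℝ).restrict (Set.Ioi 0)) := by
    have h1 : Integrable (fun s => g' s * fInf - g' s * (fInf - f s))
        ((volume : Measure ℝ).restrict (Set.Ioi 0)) := (Ig'.mul_const fInf).sub IL
    exact h1.congr (Filter.Eventually.of_forall fun s => by ring)
  have Igh : Integrable (fun t => g t * h t) (ν.restrict (Set.Ici 0)) := by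
    have h1 : Integrable (fun t => (g t - g 0) * h t + g 0 * h t)
        (ν.restrict (Set.Ici 0)) := IR.add (Ih.const_mul (g 0))
    exact h1.congr (Filter.Eventually.of_forall fun t => by ring)
  -- expansions of the two sides
  have hR : (∫ t in Set.Ici (0 : ℝ), (g t - g 0) * h t ∂ν)
      = (∫ t in Set.Ici (0 : ℝ), g t * h t ∂ν) - g 0 * fInf := by
    have h1 : (∫ t in Set.Ici (0 : ℝ), (g t - g 0) * h t ∂ν)
        = ∫ t in Set.Ici (0 : ℝ), (g t * h t - g 0 * h t) ∂ν := by
      apply integral_congr_ae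
      filter_upwards with t
      ring
    rw [h1, MeasureTheory.integral_sub Igh (Ih.const_mul (g 0)),
      MeasureTheory.integral_const_mul]
  set I' : ℂ := ∫ s in Set.Ioi (0 : ℝ), g' s with hI'def
  have hL : (∫ s in Set.Ioi (0 : ℝ), g' s * (fInf - f s))
      = fInf * I' - ∫ s in Set.Ioi (0 : ℝ), g' s * f s := by
    have h1 : (∫ s in Set.Ioi (0 : ℝ), g' s * (fInf - f s))
        = ∫ s in Set.Ioi (0 : ℝ), (g' s * fInf - g' s * f s) := by
      apply integral_congr_ae
      filter_upwards with s
      ring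
    rw [h1, MeasureTheory.integral_sub (Ig'.mul_const fInf) Ifg',
      MeasureTheory.integral_mul_const, hI'def]
    ring
  -- limit of g at infinity
  have hgt : Tendsto g atTop (nhds (g 0 + I')) := by
    have h1 : Tendsto (fun x => ∫ s in (0 : ℝ)..x, g' s) atTop (nhds I') :=
      MeasureTheory.intervalIntegral_tendsto_integral_Ioi 0
        (hint.mono_set Set.Ioi_subset_Ici_self) tendsto_id
    have h2 : Tendsto (fun x => g 0 + ∫ s in (0 : ℝ)..x, g' s) atTop
        (nhds (g 0 + I')) := tendsto_const_nhds.add h1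
    refine Filter.Tendsto.congr' ?_ h2
    filter_upwards [eventually_ge_atTop (0 : ℝ)] with x hx
    rw [intervalIntegral.integral_of_le hx, FTC x hx]
    ring
  -- limit of f at infinity
  have hft : Tendsto f atTop (nhds fInf) := by
    have hmeas0 : Tendsto (fun x => (ν (Set.Ici x)).toReal) atTop (nhds 0) := by
      have hIco := MeasureTheory.tendsto_measure_Ico_atTop ν 0
      have h1 : Tendsto (fun x => (ν (Set.Ico 0 x)).toReal) atTop
          (nhds (ν (Set.Ici 0)).toReal) :=
        (ENNReal.tendsto_toReal (measure_ne_top ν _)).comp hIco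
      have h2 : Tendsto
          (fun x => (ν (Set.Ici 0)).toReal - (ν (Set.Ico 0 x)).toReal) atTop
          (nhds 0) := by
        have h3 := tendsto_const_nhds (x := (ν (Set.Ici 0)).toReal)
          (f := (atTop : Filter ℝ)) |>.sub h1
        simpa using h3
      refine Filter.Tendsto.congr' ?_ h2
      filter_upwards [eventually_ge_atTop (0 : ℝ)] with x hx
      have hd : Disjoint (Set.Ico (0 : ℝ) x) (Set.Ici x) := by
        rw [Set.disjoint_left]
        rintro y ⟨_, hy2⟩ hy3
        exact absurd hy3 (not_le.2 hy2)
      have hu : ν (Set.Ico 0 x) + ν (Set.Ici x) = ν (Set.Ici 0) := by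
        rw [← MeasureTheory.measure_union hd measurableSet_Ici,
          Set.Ico_union_Ici_eq_Ici hx]
      have hu' : (ν (Set.Ico 0 x)).toReal + (ν (Set.Ici x)).toReal
          = (ν (Set.Ici 0)).toReal := by
        rw [← ENNReal.toReal_add (measure_ne_top ν _) (measure_ne_top ν _), hu]
      linarith
    have hb : ∀ᶠ x in atTop, ‖f x - fInf‖ ≤ (ν (Set.Ici x)).toReal := by
      filter_upwards [eventually_ge_atTop (0 : ℝ)] with x hx
      have h1 : f x - fInf = -(∫ t in Set.Ici x, h t ∂ν) := by
        rw [hsplit x hx]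
        ring
      rw [h1, norm_neg]
      calc ‖∫ t in Set.Ici x, h t ∂ν‖ ≤ ∫ t in Set.Ici x, ‖h t‖ ∂ν :=
            norm_integral_le_integral_norm _
        _ = ∫ _t in Set.Ici x, (1 : ℝ) ∂ν := by simp only [hh_norm]
        _ = (ν (Set.Ici x)).toReal := by simp; rfl
    have h4 : Tendsto (fun x => ‖f x - fInf‖) atTop (nhds 0) :=
      squeeze_zero' (Filter.Eventually.of_forall fun x => norm_nonneg _) hb hmeas0
    rw [tendsto_iff_norm_sub_tendsto_zero]
    exact h4
  refine ⟨fInf * (g 0 + I'), hft.mul hgt, ?_⟩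
  have hIci_Ioi : (∫ t in Set.Ici (0 : ℝ), f t * g' t)
      = ∫ t in Set.Ioi (0 : ℝ), f t * g' t := MeasureTheory.integral_Ici_eq_integral_Ioi
  have hcomm : (∫ t in Set.Ioi (0 : ℝ), f t * g' t)
      = ∫ s in Set.Ioi (0 : ℝ), g' s * f s :=
    integral_congr_ae (Filter.Eventually.of_forall fun t => mul_comm _ _)
  calc (∫ x in Set.Ici (0 : ℝ), g x * h x ∂ν)
      = (∫ t in Set.Ici (0 : ℝ), (g t - g 0) * h t ∂ν) + g 0 * fInf := by
        rw [hR]; ring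
    _ = (∫ s in Set.Ioi (0 : ℝ), g' s * (fInf - f s)) + g 0 * fInf := by rw [hFub]
    _ = (fInf * I' - ∫ s in Set.Ioi (0 : ℝ), g' s * f s) + g 0 * fInf := by rw [hL]
    _ = fInf * (g 0 + I') - ∫ t in Set.Ici (0 : ℝ), f t * g' t := by
        rw [hIci_Ioi, hcomm]; ring
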